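/- Hermite–Biehler, one direction: if p and q are real polynomials of degrees k and k−1 respectively, both with all real simple roots that strictly interlace (between any two consecutive roots of p lies exactly one root of q), q has negative leading coefficient and p is monic, then every complex root of s = p + iq lies in the open upper half-plane. -/

import Mathlib

open Polynomial Finset

lemma sign_prod_helper {ι : Type*} [DecidableEq ι] (s t : Finset ι) (hts : t ⊆ s) (f : ι → ℝ)
    (hneg : ∀ i ∈ t, f i < 0) (hpos : ∀ i ∈ s, i ∉ t → 0 < f i) :
    0 < (-1 : ℝ) ^ t.card * ∏ i ∈ s, f i := by
  rw [← Finset.prod_sdiff hts]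
  have h1 : 0 < ∏ i ∈ s \ t, f i :=
    Finset.prod_pos fun i hi => hpos i (Finset.mem_sdiff.1 hi).1 (Finset.mem_sdiff.1 hi).2
  have h2 : 0 < (-1 : ℝ) ^ t.card * ∏ i ∈ t, f i := by
    have : (-1 : ℝ) ^ t.card * ∏ i ∈ t, f i = ∏ i ∈ t, (-f i) := by
      rw [← Finset.prod_const (-1 : ℝ), ← Finset.prod_mul_distrib]
      exact Finset.prod_congr rfl fun i _ => neg_one_mul (f i)
    rw [this]
    exact Finset.prod_pos fun i hi => neg_pos.2 (hneg i hi)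
  nlinarith

lemma card_filter_le_fin (M c : ℕ) :
    ((Finset.univ : Finset (Fin M)).filter fun m : Fin M => c ≤ (m : ℕ)).card = M - c := by
  rcases lt_or_ge c M with h | h
  · have : ((Finset.univ : Finset (Fin M)).filter fun m : Fin M => c ≤ (m : ℕ)) = Finset.Ici ⟨c, h⟩ := by
      ext m; simp [Fin.le_def]
    rw [this, Fin.card_Ici]
  · have : ((Finset.univ : Finset (Fin M)).filter fun m : Fin M => c ≤ (m : ℕ)) = ∅ := by
      ext m; simp only [Finset.mem_filter, Finset.mem_univ, true_and, Finset.notMem_empty,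
        iff_false, not_le]
      exact lt_of_lt_of_le m.isLt h
    rw [this]
    simp [Nat.sub_eq_zero_of_le h]

theorem hermite_biehler_forward (k : ℕ) (hk : 1 ≤ k)
    (a : Fin k → ℝ) (ha : StrictMono a)
    (b : Fin (k - 1) → ℝ) (hb : StrictMono b)
    (c : ℝ) (hc : c < 0)
    (p q : ℝ[X])
    (hp : p = ∏ i : Fin k, (X - C (a i)))
    (hq : q = C c * ∏ i : Fin (k - 1), (X - C (b i)))
    (hinter : ∀ i : Fin (k - 1),
      a (Fin.castLE (Nat.sub_le k 1) i) < b i ∧ b i < a (Fin.cast (Nat.succ_pred_eq_of_pos hk) i.succ)) :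
    ∀ z : ℂ, Polynomial.aeval z p + Complex.I * Polynomial.aeval z q = 0 → 0 < z.im := by
  intro z hz
  have hainj : Function.Injective a := ha.injective
  set cR : Fin k → ℝ := fun i => eval (a i) q * (∏ j ∈ Finset.univ.erase i, (a i - a j))⁻¹ with hcR
  have hQne : ∀ i : Fin k, (∏ j ∈ Finset.univ.erase i, (a i - a j)) ≠ 0 := by
    intro i
    refine Finset.prod_ne_zero_iff.2 fun j hj => ?_
    have hji : j ≠ i := (Finset.mem_erase.1 hj).1
    exact sub_ne_zero.2 fun h => hji (hainj h).symm
  have hcneg : ∀ i : Fin k, cR i < 0 := by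
    intro i
    have hQval : eval (a i) q = c * ∏ m : Fin (k-1), (a i - b m) := by
      simp [hq, eval_prod]
    have hP : 0 < (-1:ℝ)^(k - 1 - (i:ℕ)) * ∏ m : Fin (k-1), (a i - b m) := by
      have h := sign_prod_helper (Finset.univ)
        (Finset.univ.filter fun m : Fin (k-1) => (i:ℕ) ≤ (m:ℕ)) (Finset.filter_subset _ _)
        (fun m => a i - b m) ?_ ?_
      · rwa [card_filter_le_fin] at h
      · intro m hm
        simp only [Finset.mem_filter, Finset.mem_univ, true_and] at hm
        have h1 : a i ≤ a (Fin.castLE (Nat.sub_le k 1) m) := ha.monotone (by simp [Fin.le_def, hm])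
        have h2 := (hinter m).1
        show a i - b m < 0
        linarith
      · intro m _ hm
        simp only [Finset.mem_filter, Finset.mem_univ, true_and, not_le] at hm
        have h1 : a (Fin.cast (Nat.succ_pred_eq_of_pos hk) m.succ) ≤ a i :=
          ha.monotone (by simp [Fin.le_def]; omega)
        have h2 := (hinter m).2
        show 0 < a i - b m
        linarith
    have hQ : 0 < (-1:ℝ)^(k - 1 - (i:ℕ)) * ∏ j ∈ Finset.univ.erase i, (a i - a j) := by
      have h := sign_prod_helper (Finset.univ.erase i) (Finset.Ioi i) ?_
        (fun j => a i - a j) ?_ ?_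
      · rwa [Fin.card_Ioi] at h
      · intro j hj
        simp only [Finset.mem_Ioi] at hj
        exact Finset.mem_erase.2 ⟨ne_of_gt hj, Finset.mem_univ j⟩
      · intro j hj
        simp only [Finset.mem_Ioi] at hj
        simpa using ha hj
      · intro j hj hj2
        simp only [Finset.mem_erase] at hj
        simp only [Finset.mem_Ioi, not_lt] at hj2
        have : j < i := lt_of_le_of_ne hj2 hj.1
        simpa using ha this
    have hPQ : 0 < (∏ m : Fin (k-1), (a i - b m)) * (∏ j ∈ Finset.univ.erase i, (a i - a j)) := by
      have hmul := mul_pos hP hQ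
      have hone : ((-1:ℝ)^(k - 1 - (i:ℕ))) * ((-1:ℝ)^(k - 1 - (i:ℕ))) = 1 := by
        rw [← pow_add]
        exact Even.neg_one_pow ⟨k - 1 - (i:ℕ), rfl⟩
      nlinarith
    have hQsq : 0 < (∏ j ∈ Finset.univ.erase i, (a i - a j))^2 :=
      lt_of_le_of_ne (sq_nonneg _) (Ne.symm (pow_ne_zero 2 (hQne i)))
    have hrw : cR i = c * (((∏ m : Fin (k-1), (a i - b m)) * (∏ j ∈ Finset.univ.erase i, (a i - a j)))
        / (∏ j ∈ Finset.univ.erase i, (a i - a j))^2) := by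
      have hdiv : ((∏ m : Fin (k-1), (a i - b m)) * (∏ j ∈ Finset.univ.erase i, (a i - a j)))
          / (∏ j ∈ Finset.univ.erase i, (a i - a j))^2
          = (∏ m : Fin (k-1), (a i - b m)) * (∏ j ∈ Finset.univ.erase i, (a i - a j))⁻¹ := by
        rw [sq, ← div_div, mul_div_assoc, div_self (hQne i), mul_one, div_eq_mul_inv]
      rw [hdiv, hcR]
      simp only [hQval]
      ring
    rw [hrw]
    exact mul_neg_of_neg_of_pos hc (div_pos hPQ hQsq)
  have hqa_ne : ∀ i : Fin k, eval (a i) q ≠ 0 := by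
    intro i h
    have := hcneg i
    rw [hcR] at this
    simp only [h, zero_mul] at this
    exact lt_irrefl 0 this
  set A : Fin k → ℂ := fun i => ((a i : ℝ) : ℂ) with hA
  have hPz : aeval z p = ∏ i : Fin k, (z - A i) := by
    rw [hp, map_prod]
    refine Finset.prod_congr rfl fun i _ => ?_
    simp [hA, Complex.coe_algebraMap]
  have hnodeA : ∀ i : Fin k, aeval (A i) q = ((eval (a i) q : ℝ) : ℂ) := by
    intro i
    rw [show A i = algebraMap ℝ ℂ (a i) from rfl,
      aeval_algebraMap_apply_eq_algebraMap_eval]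
    rfl
  have hnodeM : ∀ i : Fin k, (q.map (algebraMap ℝ ℂ)).eval (A i) = ((eval (a i) q : ℝ) : ℂ) := by
    intro i
    rw [eval_map, ← aeval_def]
    exact hnodeA i
  have hPzne : aeval z p ≠ 0 := by
    intro h0
    have hqz0 : aeval z q = 0 := by
      have : Complex.I * aeval z q = 0 := by rw [← hz, h0, zero_add]
      simpa [Complex.I_ne_zero] using this
    rw [hPz] at h0
    obtain ⟨i, _, hi⟩ := Finset.prod_eq_zero_iff.1 h0
    have hzA : z = A i := by linear_combination hi
    rw [hzA, hnodeA i] at hqz0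
    exact hqa_ne i (by exact_mod_cast hqz0)
  have hzi : ∀ i : Fin k, z - A i ≠ 0 := by
    intro i h
    exact hPzne (by rw [hPz]; exact Finset.prod_eq_zero (Finset.mem_univ i) h)
  -- Lagrange interpolation over ℂ
  have hAinj : Set.InjOn A (Finset.univ : Finset (Fin k)) := by
    intro i _ j _ h
    exact hainj (Complex.ofReal_injective h)
  have hdegq : q.degree < ((Finset.univ : Finset (Fin k)).card : WithBot ℕ) := by
    rw [hq, degree_C_mul (ne_of_lt hc)]
    have hdp : (∏ i : Fin (k-1), (X - C (b i))).degree = ((k-1 : ℕ) : WithBot ℕ) := by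
      rw [degree_prod]
      simp [degree_X_sub_C]
    rw [hdp, Finset.card_univ, Fintype.card_fin]
    exact_mod_cast Nat.sub_lt hk one_pos
  have hdeg : (q.map (algebraMap ℝ ℂ)).degree < ((Finset.univ : Finset (Fin k)).card : WithBot ℕ) := by
    rwa [degree_map_eq_of_injective (algebraMap ℝ ℂ).injective]
  have hinterp := Lagrange.eq_interpolate (v := A) hAinj hdeg
  have hqz : aeval z q =
      ∑ i : Fin k, ((eval (a i) q : ℝ) : ℂ) * ∏ j ∈ Finset.univ.erase i, ((A i - A j)⁻¹ * (z - A j)) := by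
    have h1 : aeval z q = (q.map (algebraMap ℝ ℂ)).eval z := by rw [aeval_def, eval_map]
    rw [h1, hinterp, Lagrange.interpolate_apply, eval_finset_sum]
    refine Finset.sum_congr rfl fun i _ => ?_
    rw [eval_mul, eval_C, hnodeM i]
    congr 1
    rw [Lagrange.basis, eval_prod]
    refine Finset.prod_congr rfl fun j _ => ?_
    simp [Lagrange.basisDivisor]
  have hterm : ∀ i : Fin k,
      ((eval (a i) q : ℝ) : ℂ) * ∏ j ∈ Finset.univ.erase i, ((A i - A j)⁻¹ * (z - A j)) =
      ((cR i : ℝ) : ℂ) * (z - A i)⁻¹ * aeval z p := by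
    intro i
    have h4 : ((∏ j ∈ Finset.univ.erase i, (a i - a j) : ℝ) : ℂ) =
        ∏ j ∈ Finset.univ.erase i, (A i - A j) := by push_cast; rfl
    have h3 : aeval z p = (z - A i) * ∏ j ∈ Finset.univ.erase i, (z - A j) := by
      rw [hPz, ← Finset.mul_prod_erase _ _ (Finset.mem_univ i)]
    have hcast : ((cR i : ℝ) : ℂ) =
        ((eval (a i) q : ℝ) : ℂ) * (∏ j ∈ Finset.univ.erase i, (A i - A j))⁻¹ := by
      rw [hcR]
      rw [Complex.ofReal_mul, Complex.ofReal_inv, h4]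
    have hPA : (∏ j ∈ Finset.univ.erase i, (A i - A j)) ≠ 0 := by
      rw [← h4]
      exact_mod_cast Complex.ofReal_ne_zero.2 (hQne i)
    rw [Finset.prod_mul_distrib, hcast, h3]
    rw [← Finset.prod_inv_distrib]
    field_simp [hPA, hzi i]
  have hQI : aeval z q = Complex.I * aeval z p := by
    have h1 : aeval z p = -(Complex.I * aeval z q) := by linear_combination hz
    rw [h1]
    linear_combination (aeval z q) * Complex.I_sq
  have hsum : ∑ i : Fin k, ((cR i : ℝ) : ℂ) * (z - A i)⁻¹ = Complex.I := by
    have h1 : (∑ i : Fin k, ((cR i : ℝ) : ℂ) * (z - A i)⁻¹) * aeval z p =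
        Complex.I * aeval z p := by
      rw [Finset.sum_mul, ← hQI, hqz]
      exact Finset.sum_congr rfl fun i _ => (hterm i).symm
    exact mul_right_cancel₀ hPzne h1
  have him := congrArg Complex.im hsum
  rw [Complex.im_sum] at him
  have him2 : ∀ i : Fin k, (((cR i : ℝ) : ℂ) * (z - A i)⁻¹).im =
      cR i * (-z.im / Complex.normSq (z - A i)) := by
    intro i
    rw [Complex.mul_im, Complex.ofReal_re, Complex.ofReal_im, Complex.inv_im]
    simp [hA, Complex.sub_im]
  rw [Finset.sum_congr rfl fun i _ => him2 i, Complex.I_im] at him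
  have hS : ∑ i : Fin k, cR i / Complex.normSq (z - A i) < 0 := by
    have hne : (Finset.univ : Finset (Fin k)).Nonempty := by
      have : Nonempty (Fin k) := ⟨⟨0, hk⟩⟩
      exact Finset.univ_nonempty
    have := Finset.sum_lt_sum_of_nonempty hne
      (f := fun i : Fin k => cR i / Complex.normSq (z - A i)) (g := fun _ => (0:ℝ)) ?_
    · simpa using this
    · intro i _
      exact div_neg_of_neg_of_pos (hcneg i) (Complex.normSq_pos.2 (hzi i))
  have hfact : ∑ i : Fin k, cR i * (-z.im / Complex.normSq (z - A i)) =
      -z.im * ∑ i : Fin k, cR i / Complex.normSq (z - A i) := by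
    rw [Finset.mul_sum]
    exact Finset.sum_congr rfl fun i _ => by ring
  rw [hfact] at him
  nlinarith [him, hS]
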